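/- Let n₁ ≥ 1, K = −1, and let (λ₁,…,λ_{n₁}, μ₁,…,μ_{n₁}) be a real-analytic solution of the system (ODE) on an open interval I with τ ≡ 0 on I. Then there exist real constants a₁,…,a_{n₁} such that for each i one of the following holds: (a) there is cᵢ ∈ ℝ with μᵢ(t) = −tanh(t + cᵢ) and λᵢ(t) = aᵢ/cosh(t + cᵢ); (b) μᵢ ≡ 1 and λᵢ(t) = aᵢ·e^t; (c) μᵢ ≡ −1 and λᵢ(t) = aᵢ·e^{−t}; (d) there is cᵢ ∈ ℝ with t + cᵢ ≠ 0 on I, μᵢ(t) = −coth(t + cᵢ) and λᵢ(t) = aᵢ/sinh(t + cᵢ). Moreover, for every index k, the sum of aᵢ over all indices i for which μᵢ and μ_k coincide as functions on I equals 0. -/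

import Mathlib

open scoped Classical
open Real

private lemma aux_const {I : Set ℝ} (hI : IsOpen I) (hc : Convex ℝ I) {f : ℝ → ℝ}
    (hf : ∀ t ∈ I, HasDerivAt f 0 t) {s t : ℝ} (hs : s ∈ I) (ht : t ∈ I) : f t = f s := by
  apply hc.is_const_of_fderivWithin_eq_zero (𝕜 := ℝ)
    (fun x hx => (hf x hx).differentiableAt.differentiableWithinAt) ?_ ht hs
  intro x hx
  rw [fderivWithin_of_isOpen hI hx, (hf x hx).hasFDerivAt.fderiv]
  ext y
  simp

/-- Key ODE lemma: on an open interval `I`, a solution of `μ' = μ² - 1`, `λ' = λμ` satisfies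
`ψ > 0`, `μψ = -ψ'`, `λψ = λ(t₀)` where `ψ(t) = cosh(t-t₀) - μ(t₀) sinh(t-t₀)`. -/
private lemma aux_key {I : Set ℝ} (hI : IsOpen I) (hc : Convex ℝ I)
    {t₀ : ℝ} (ht₀ : t₀ ∈ I) {mu lam : ℝ → ℝ}
    (hmu : ∀ t ∈ I, HasDerivAt mu ((mu t) ^ 2 - 1) t)
    (hlam : ∀ t ∈ I, HasDerivAt lam (lam t * mu t) t) :
    ∀ t ∈ I, 0 < Real.cosh (t - t₀) - mu t₀ * Real.sinh (t - t₀) ∧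
      mu t * (Real.cosh (t - t₀) - mu t₀ * Real.sinh (t - t₀))
        = -(Real.sinh (t - t₀) - mu t₀ * Real.cosh (t - t₀)) ∧
      lam t * (Real.cosh (t - t₀) - mu t₀ * Real.sinh (t - t₀)) = lam t₀ := by
  set v : ℝ := mu t₀ with hv
  set ψ : ℝ → ℝ := fun t => Real.cosh (t - t₀) - v * Real.sinh (t - t₀) with hψdef
  set ψ' : ℝ → ℝ := fun t => Real.sinh (t - t₀) - v * Real.cosh (t - t₀) with hψ'def
  have hψ : ∀ t : ℝ, HasDerivAt ψ (ψ' t) t := by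
    intro t
    have hx : HasDerivAt (fun t : ℝ => t - t₀) 1 t := (hasDerivAt_id t).sub_const t₀
    have h1 := (Real.hasDerivAt_cosh (t - t₀)).comp t hx
    have h2 := ((Real.hasDerivAt_sinh (t - t₀)).comp t hx).const_mul v
    simp only [mul_one] at h1 h2
    exact h1.sub h2
  have hψ' : ∀ t : ℝ, HasDerivAt ψ' (ψ t) t := by
    intro t
    have hx : HasDerivAt (fun t : ℝ => t - t₀) 1 t := (hasDerivAt_id t).sub_const t₀
    have h1 := (Real.hasDerivAt_sinh (t - t₀)).comp t hx
    have h2 := ((Real.hasDerivAt_cosh (t - t₀)).comp t hx).const_mul v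
    simp only [mul_one] at h1 h2
    exact h1.sub h2
  have hψ0 : ψ t₀ = 1 := by simp [ψ]
  have hψ'0 : ψ' t₀ = -v := by simp [ψ']
  have hcont : ∀ x ∈ I, ContinuousAt mu x := fun x hx => (hmu x hx).continuousAt
  set F : ℝ → ℝ := fun u => ∫ x in t₀..u, mu x with hFdef
  have hF : ∀ t ∈ I, HasDerivAt F (mu t) t := by
    intro t ht
    have hsub : Set.uIcc t₀ t ⊆ I := hc.ordConnected.uIcc_subset ht₀ ht
    have hconton : ContinuousOn mu (Set.uIcc t₀ t) :=
      fun x hx => (hcont x (hsub hx)).continuousWithinAt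
    have hint : IntervalIntegrable mu MeasureTheory.volume t₀ t :=
      hconton.intervalIntegrable
    exact intervalIntegral.integral_hasDerivAt_right hint
      (ContinuousAt.stronglyMeasurableAtFilter hI hcont t ht) (hcont t ht)
  set φ : ℝ → ℝ := fun t => Real.exp (-F t) with hφdef
  have hφpos : ∀ t, 0 < φ t := fun t => Real.exp_pos _
  have hφ0 : φ t₀ = 1 := by simp [φ, F, intervalIntegral.integral_same]
  have hφ : ∀ t ∈ I, HasDerivAt φ (-(mu t) * φ t) t := by
    intro t ht
    have := (Real.hasDerivAt_exp (-F t)).comp t (hF t ht).neg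
    exact this.congr_deriv (by simp only [φ]; ring)
  -- λ·φ is constant
  have hlamφ : ∀ t ∈ I, lam t * φ t = lam t₀ := by
    intro t ht
    have h0 : ∀ s ∈ I, HasDerivAt (fun u => lam u * φ u) 0 s := by
      intro s hs
      have := (hlam s hs).mul (hφ s hs)
      exact this.congr_deriv (by ring)
    have := aux_const hI hc h0 ht₀ ht
    simpa [hφ0] using this
  -- w·φ is constant, where w = μψ + ψ'
  have hw : ∀ t ∈ I, mu t * ψ t + ψ' t = 0 := by
    intro t ht
    have h0 : ∀ s ∈ I, HasDerivAt (fun u => (mu u * ψ u + ψ' u) * φ u) 0 s := by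
      intro s hs
      have hws : HasDerivAt (fun u => mu u * ψ u + ψ' u)
          (((mu s) ^ 2 - 1) * ψ s + mu s * ψ' s + ψ s) s :=
        ((hmu s hs).mul (hψ s)).add (hψ' s)
      have := hws.mul (hφ s hs)
      exact this.congr_deriv (by ring)
    have hcst := aux_const hI hc h0 ht₀ ht
    have : (mu t * ψ t + ψ' t) * φ t = 0 := by
      rw [hcst, hψ0, hψ'0, hφ0]; ring
    have hφne : φ t ≠ 0 := (hφpos t).ne'
    exact (mul_eq_zero.mp this).resolve_right hφne
  -- ψ = φ on I
  have hψφ : ∀ t ∈ I, ψ t = φ t := by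
    intro t ht
    have h0 : ∀ s ∈ I, HasDerivAt (fun u => ψ u * Real.exp (F u)) 0 s := by
      intro s hs
      have hcomp : HasDerivAt (fun u => Real.exp (F u)) (Real.exp (F s) * mu s) s := by
        exact (Real.hasDerivAt_exp (F s)).comp s (hF s hs)
      have := (hψ s).mul hcomp
      refine this.congr_deriv ?_
      have hws := hw s hs
      linear_combination (Real.exp (F s)) * hws
    have hcst := aux_const hI hc h0 ht₀ ht
    have h1 : ψ t * Real.exp (F t) = 1 := by
      rw [hcst, hψ0]; simp [F, intervalIntegral.integral_same]
    have h2 : Real.exp (F t) ≠ 0 := (Real.exp_pos _).ne'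
    have : ψ t = (Real.exp (F t))⁻¹ := by field_simp at h1 ⊢; linarith [h1]
    rw [this, hφdef]
    simp [Real.exp_neg]
  intro t ht
  refine ⟨?_, ?_, ?_⟩
  · rw [show Real.cosh (t - t₀) - mu t₀ * Real.sinh (t - t₀) = ψ t from rfl, hψφ t ht]
    exact hφpos t
  · have := hw t ht
    show mu t * ψ t = -ψ' t
    linarith
  · show lam t * ψ t = lam t₀
    rw [hψφ t ht]
    exact hlamφ t ht
/-- Classification of solutions of the ODE system with `K = -1` and `τ ≡ 0`. -/
theorem stmt_2 (n₁ : ℕ) (hn : 1 ≤ n₁) (K : ℝ) (hK : K = -1)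
    (I : Set ℝ) (hI : IsOpen I) (hIconn : I.OrdConnected)
    (lam mu : Fin n₁ → ℝ → ℝ)
    (hlam : ∀ i, AnalyticOnNhd ℝ (lam i) I)
    (hmu : ∀ i, AnalyticOnNhd ℝ (mu i) I)
    (tau : ℝ → ℝ) (htau : ∀ t, tau t = (2/3) * ∑ i, lam i t)
    (hode1 : ∀ i, ∀ t ∈ I, HasDerivAt (lam i) ((tau t / 2 + lam i t) * mu i t) t)
    (hode2 : ∀ i, ∀ t ∈ I,
      HasDerivAt (mu i) ((mu i t) ^ 2 - tau t / 2 * lam i t + K) t)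
    (hode3 : ∀ t ∈ I,
      -(deriv (deriv tau) t) + deriv tau t * (∑ i, mu i t)
        + tau t * ((tau t) ^ 2 / 4 - ((n₁ : ℝ) + 1) * K + ∑ i, (lam i t) ^ 2) = 0)
    (htau0 : ∀ t ∈ I, tau t = 0) :
    ∃ a : Fin n₁ → ℝ,
      (∀ i,
        (∃ c : ℝ, ∀ t ∈ I,
            mu i t = -Real.tanh (t + c) ∧ lam i t = a i / Real.cosh (t + c)) ∨
        ((∀ t ∈ I, mu i t = 1) ∧ (∀ t ∈ I, lam i t = a i * Real.exp t)) ∨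
        ((∀ t ∈ I, mu i t = -1) ∧ (∀ t ∈ I, lam i t = a i * Real.exp (-t))) ∨
        (∃ c : ℝ, (∀ t ∈ I, t + c ≠ 0) ∧
          (∀ t ∈ I, mu i t = -(Real.cosh (t + c) / Real.sinh (t + c)) ∧
            lam i t = a i / Real.sinh (t + c)))) ∧
      (∀ k : Fin n₁,
        (∑ i ∈ Finset.univ.filter (fun i => Set.EqOn (mu i) (mu k) I), a i) = 0) := by
  subst hK
  rcases I.eq_empty_or_nonempty with hIe | ⟨t₀, ht₀⟩
  · subst hIe
    exact ⟨0, fun i => Or.inr (Or.inl ⟨fun t ht => absurd ht (Set.notMem_empty t),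
      fun t ht => absurd ht (Set.notMem_empty t)⟩),
      fun k => Finset.sum_eq_zero fun i _ => rfl⟩
  have hc : Convex ℝ I := convex_iff_ordConnected.mpr hIconn
  have hsum0 : ∀ t ∈ I, (∑ i, lam i t) = 0 := by
    intro t ht
    have h := htau0 t ht
    rw [htau t] at h
    linarith
  have hmu' : ∀ i, ∀ t ∈ I, HasDerivAt (mu i) ((mu i t) ^ 2 - 1) t := by
    intro i t ht
    have h := hode2 i t ht
    rw [htau0 t ht] at h
    have he : (mu i t) ^ 2 - 0 / 2 * lam i t + (-1) = (mu i t) ^ 2 - 1 := by ring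
    rwa [he] at h
  have hlam' : ∀ i, ∀ t ∈ I, HasDerivAt (lam i) (lam i t * mu i t) t := by
    intro i t ht
    have h := hode1 i t ht
    rw [htau0 t ht] at h
    have he : (0 / 2 + lam i t) * mu i t = lam i t * mu i t := by ring
    rwa [he] at h
  have key : ∀ i, ∀ t ∈ I,
      0 < Real.cosh (t - t₀) - mu i t₀ * Real.sinh (t - t₀) ∧
      mu i t * (Real.cosh (t - t₀) - mu i t₀ * Real.sinh (t - t₀))
        = -(Real.sinh (t - t₀) - mu i t₀ * Real.cosh (t - t₀)) ∧
      lam i t * (Real.cosh (t - t₀) - mu i t₀ * Real.sinh (t - t₀)) = lam i t₀ :=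
    fun i => aux_key hI hc ht₀ (hmu' i) (hlam' i)
  have hmu_rep : ∀ i, ∀ t ∈ I, mu i t
      = (-(Real.sinh (t - t₀) - mu i t₀ * Real.cosh (t - t₀)))
        / (Real.cosh (t - t₀) - mu i t₀ * Real.sinh (t - t₀)) := by
    intro i t ht
    obtain ⟨hpos, he, -⟩ := key i t ht
    rw [eq_div_iff hpos.ne']
    exact he
  have hVeq : ∀ i k : Fin n₁, mu i t₀ = mu k t₀ → Set.EqOn (mu i) (mu k) I := by
    intro i k hik t ht
    rw [hmu_rep i t ht, hmu_rep k t ht, hik]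
  -- all power sums vanish
  have hFn : ∀ n : ℕ, (∀ t ∈ I, (∑ i, lam i t * mu i t ^ n) = 0)
      ∧ (∀ t ∈ I, (∑ i, lam i t * mu i t ^ (n + 1)) = 0) := by
    intro n
    induction n with
    | zero =>
      constructor
      · intro t ht
        simpa using hsum0 t ht
      · intro t ht
        have hD : HasDerivAt (fun u => ∑ i, lam i u) (∑ i, lam i t * mu i t) t :=
          HasDerivAt.fun_sum fun i _ => hlam' i t ht
        have hev : (fun u => ∑ i, lam i u) =ᶠ[nhds t] (fun _ => (0 : ℝ)) := by
          filter_upwards [hI.mem_nhds ht] with s hs using hsum0 s hs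
        have hD0 : HasDerivAt (fun u => ∑ i, lam i u) 0 t :=
          (hasDerivAt_const t (0 : ℝ)).congr_of_eventuallyEq hev
        have h := hD.unique hD0
        simpa using h
    | succ n ih =>
      refine ⟨ih.2, ?_⟩
      intro t ht
      have hD : HasDerivAt (fun u => ∑ i, lam i u * mu i u ^ (n + 1))
          (∑ i, (lam i t * mu i t * mu i t ^ (n + 1)
            + lam i t * (((n : ℝ) + 1) * mu i t ^ n * ((mu i t) ^ 2 - 1)))) t := by
        refine HasDerivAt.fun_sum fun i _ => ?_
        have h := (hlam' i t ht).mul ((hmu' i t ht).pow (n + 1))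
        refine h.congr_deriv ?_
        push_cast [Nat.add_sub_cancel, Pi.pow_apply]
        ring
      have hev : (fun u => ∑ i, lam i u * mu i u ^ (n + 1)) =ᶠ[nhds t] (fun _ => (0 : ℝ)) := by
        filter_upwards [hI.mem_nhds ht] with s hs using ih.2 s hs
      have hD0 : HasDerivAt (fun u => ∑ i, lam i u * mu i u ^ (n + 1)) 0 t :=
        (hasDerivAt_const t (0 : ℝ)).congr_of_eventuallyEq hev
      have hkey := hD.unique hD0
      have hconv : (∑ i, (lam i t * mu i t * mu i t ^ (n + 1)
            + lam i t * (((n : ℝ) + 1) * mu i t ^ n * ((mu i t) ^ 2 - 1))))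
          = ((n : ℝ) + 2) * (∑ i, lam i t * mu i t ^ (n + 2))
            - ((n : ℝ) + 1) * (∑ i, lam i t * mu i t ^ n) := by
        rw [Finset.mul_sum, Finset.mul_sum, ← Finset.sum_sub_distrib]
        exact Finset.sum_congr rfl fun i _ => by ring
      rw [hconv, ih.1 t ht] at hkey
      have h2 : ((n : ℝ) + 2) ≠ 0 := by positivity
      have hS : ((n : ℝ) + 2) * (∑ i, lam i t * mu i t ^ (n + 2)) = 0 := by linarith
      exact (mul_eq_zero.mp hS).resolve_left h2
  have hpoly : ∀ p : Polynomial ℝ, (∑ i, lam i t₀ * p.eval (mu i t₀)) = 0 := by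
    intro p
    calc (∑ i, lam i t₀ * p.eval (mu i t₀))
        = ∑ i, ∑ j ∈ Finset.range (p.natDegree + 1),
            p.coeff j * (lam i t₀ * mu i t₀ ^ j) := by
          refine Finset.sum_congr rfl fun i _ => ?_
          rw [Polynomial.eval_eq_sum_range, Finset.mul_sum]
          exact Finset.sum_congr rfl fun j _ => by ring
      _ = ∑ j ∈ Finset.range (p.natDegree + 1),
            p.coeff j * ∑ i, lam i t₀ * mu i t₀ ^ j := by
          rw [Finset.sum_comm]
          exact Finset.sum_congr rfl fun j _ => by rw [Finset.mul_sum]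
      _ = 0 := Finset.sum_eq_zero fun j _ => by rw [(hFn j).1 t₀ ht₀, mul_zero]
  have hclass : ∀ k : Fin n₁,
      (∑ i ∈ Finset.univ.filter (fun i => mu i t₀ = mu k t₀), lam i t₀) = 0 := by
    intro k
    set T : Finset ℝ := (Finset.univ.image (fun i => mu i t₀)).erase (mu k t₀) with hT
    set p : Polynomial ℝ := ∏ u ∈ T, (Polynomial.X - Polynomial.C u) with hp
    have hevalk : p.eval (mu k t₀) ≠ 0 := by
      rw [hp, Polynomial.eval_prod]
      refine Finset.prod_ne_zero_iff.mpr fun u hu => ?_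
      simp only [Polynomial.eval_sub, Polynomial.eval_X, Polynomial.eval_C]
      exact sub_ne_zero.mpr (Ne.symm (Finset.ne_of_mem_erase hu))
    have hsplit := hpoly p
    rw [← Finset.sum_filter_add_sum_filter_not Finset.univ
      (fun i => mu i t₀ = mu k t₀)] at hsplit
    have hz : (∑ i ∈ Finset.univ.filter (fun i => ¬ mu i t₀ = mu k t₀),
        lam i t₀ * p.eval (mu i t₀)) = 0 := by
      refine Finset.sum_eq_zero fun i hi => ?_
      rw [Finset.mem_filter] at hi
      have hmem : mu i t₀ ∈ T :=
        Finset.mem_erase.mpr ⟨hi.2, Finset.mem_image_of_mem _ (Finset.mem_univ i)⟩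
      have hpe : p.eval (mu i t₀) = 0 := by
        rw [hp, Polynomial.eval_prod]
        apply Finset.prod_eq_zero hmem
        simp
      rw [hpe, mul_zero]
    have heqk : (∑ i ∈ Finset.univ.filter (fun i => mu i t₀ = mu k t₀),
          lam i t₀ * p.eval (mu i t₀))
        = (∑ i ∈ Finset.univ.filter (fun i => mu i t₀ = mu k t₀), lam i t₀)
            * p.eval (mu k t₀) := by
      rw [Finset.sum_mul]
      refine Finset.sum_congr rfl fun i hi => ?_
      rw [(Finset.mem_filter.mp hi).2]
    rw [heqk, hz, add_zero] at hsplit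
    exact (mul_eq_zero.mp hsplit).resolve_right hevalk
  -- the coefficient function
  set g : ℝ → ℝ := fun v =>
    if v = 1 then Real.exp (-t₀)
    else if v = -1 then Real.exp t₀
    else if |v| < 1 then Real.cosh (Real.log (Real.sqrt ((1 - v) / (1 + v))))
    else Real.sinh (Real.log (Real.sqrt ((v - 1) / (v + 1)))) with hg
  refine ⟨fun i => g (mu i t₀) * lam i t₀, ?_, ?_⟩
  · intro i
    by_cases hv1 : mu i t₀ = 1
    · refine Or.inr (Or.inl ⟨?_, ?_⟩)
      · intro t ht
        obtain ⟨hpos, he, -⟩ := key i t ht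
        rw [hv1] at he
        have hcs := Real.cosh_sub_sinh (t - t₀)
        have hEpos := Real.exp_pos (-(t - t₀))
        have hmuE : mu i t * Real.exp (-(t - t₀)) = 1 * Real.exp (-(t - t₀)) := by
          rw [← hcs]; linear_combination he
        exact mul_right_cancel₀ hEpos.ne' hmuE
      · intro t ht
        obtain ⟨hpos, -, hl⟩ := key i t ht
        rw [hv1] at hl
        have hcs := Real.cosh_sub_sinh (t - t₀)
        have hgv : g (mu i t₀) = Real.exp (-t₀) := by rw [hg, hv1]; simp
        show lam i t = g (mu i t₀) * lam i t₀ * Real.exp t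
        rw [hgv]
        have hl' : lam i t * Real.exp (-(t - t₀)) = lam i t₀ := by
          rw [← hcs]; linear_combination hl
        have hexp1 : Real.exp (-t₀) * Real.exp t * Real.exp (-(t - t₀)) = 1 := by
          rw [← Real.exp_add, ← Real.exp_add,
            show -t₀ + t + -(t - t₀) = 0 by ring, Real.exp_zero]
        apply mul_right_cancel₀ (Real.exp_pos (-(t - t₀))).ne'
        rw [hl']
        linear_combination (-(lam i t₀)) * hexp1
    · by_cases hv2 : mu i t₀ = -1
      · refine Or.inr (Or.inr (Or.inl ⟨?_, ?_⟩))
        · intro t ht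
          obtain ⟨hpos, he, -⟩ := key i t ht
          rw [hv2] at he
          have hcs := Real.cosh_add_sinh (t - t₀)
          have hEpos := Real.exp_pos (t - t₀)
          have hmuE : mu i t * Real.exp (t - t₀) = (-1) * Real.exp (t - t₀) := by
            rw [← hcs]; linear_combination he
          exact mul_right_cancel₀ hEpos.ne' hmuE
        · intro t ht
          obtain ⟨hpos, -, hl⟩ := key i t ht
          rw [hv2] at hl
          have hcs := Real.cosh_add_sinh (t - t₀)
          have hgv : g (mu i t₀) = Real.exp t₀ := by rw [hg, hv2]; norm_num
          show lam i t = g (mu i t₀) * lam i t₀ * Real.exp (-t)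
          rw [hgv]
          have hl' : lam i t * Real.exp (t - t₀) = lam i t₀ := by
            rw [← hcs]; linear_combination hl
          have hexp1 : Real.exp t₀ * Real.exp (-t) * Real.exp (t - t₀) = 1 := by
            rw [← Real.exp_add, ← Real.exp_add,
              show t₀ + -t + (t - t₀) = 0 by ring, Real.exp_zero]
          apply mul_right_cancel₀ (Real.exp_pos (t - t₀)).ne'
          rw [hl']
          linear_combination (-(lam i t₀)) * hexp1
      · by_cases hv3 : |mu i t₀| < 1
        · -- tanh case
          obtain ⟨hvl, hvr⟩ := abs_lt.mp hv3
          set v := mu i t₀ with hvdef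
          have h1v : (0 : ℝ) < 1 + v := by linarith
          have hq : 0 < (1 - v) / (1 + v) := div_pos (by linarith) h1v
          set E := Real.sqrt ((1 - v) / (1 + v)) with hEdef
          have hEpos : 0 < E := Real.sqrt_pos.mpr hq
          have hE2 : E ^ 2 = (1 - v) / (1 + v) := Real.sq_sqrt hq.le
          have hE2' : E ^ 2 * (1 + v) = 1 - v := (eq_div_iff h1v.ne').mp hE2
          set s := Real.log E with hsdef
          have hes : Real.exp s = E := Real.exp_log hEpos
          have hsc : Real.sinh s = -v * Real.cosh s := by
            rw [Real.sinh_eq, Real.cosh_eq, Real.exp_neg, hes]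
            field_simp
            linear_combination hE2'
          have hcoshpos := Real.cosh_pos (x := s)
          refine Or.inl ⟨s - t₀, ?_⟩
          intro t ht
          obtain ⟨hpos, he, hl⟩ := key i t ht
          have hcc : Real.cosh (t + (s - t₀))
              = Real.cosh s * (Real.cosh (t - t₀) - v * Real.sinh (t - t₀)) := by
            rw [show t + (s - t₀) = (t - t₀) + s by ring, Real.cosh_add, hsc]
            ring
          have hss : Real.sinh (t + (s - t₀))
              = Real.cosh s * (Real.sinh (t - t₀) - v * Real.cosh (t - t₀)) := by
            rw [show t + (s - t₀) = (t - t₀) + s by ring, Real.sinh_add, hsc]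
            ring
          constructor
          · rw [Real.tanh_eq_sinh_div_cosh, hss, hcc,
              mul_div_mul_left _ _ hcoshpos.ne', ← neg_div, eq_div_iff hpos.ne']
            exact he
          · have hgv : g (mu i t₀) = Real.cosh s := by
              rw [hg]
              simp only [← hvdef, if_neg hv1, if_neg hv2, if_pos hv3]
              rfl
            show lam i t = g (mu i t₀) * lam i t₀ / Real.cosh (t + (s - t₀))
            rw [hgv, eq_div_iff (Real.cosh_pos (x := t + (s - t₀))).ne', hcc]
            linear_combination Real.cosh s * hl
        · -- coth case
          have habs1 : |mu i t₀| ≠ 1 := by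
            intro h
            rcases (abs_eq zero_le_one).mp h with h' | h'
            · exact hv1 h'
            · exact hv2 h'
          have hv4 : 1 < |mu i t₀| := lt_of_le_of_ne (not_lt.mp hv3) (Ne.symm habs1)
          set v := mu i t₀ with hvdef
          have hq : 0 < (v - 1) / (v + 1) := by
            rcases lt_abs.mp hv4 with h' | h'
            · exact div_pos (by linarith) (by linarith)
            · apply div_pos_iff.mpr
              right
              constructor <;> linarith
          have h1v : v + 1 ≠ 0 := by
            rcases lt_abs.mp hv4 with h' | h' <;> intro h0 <;> nlinarith
          set E := Real.sqrt ((v - 1) / (v + 1)) with hEdef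
          have hEpos : 0 < E := Real.sqrt_pos.mpr hq
          have hE2 : E ^ 2 = (v - 1) / (v + 1) := Real.sq_sqrt hq.le
          have hE2' : E ^ 2 * (v + 1) = v - 1 := (eq_div_iff h1v).mp hE2
          set s := Real.log E with hsdef
          have hes : Real.exp s = E := Real.exp_log hEpos
          have hcs : Real.cosh s = -v * Real.sinh s := by
            rw [Real.sinh_eq, Real.cosh_eq, Real.exp_neg, hes]
            field_simp
            linear_combination hE2'
          have hsinhne : Real.sinh s ≠ 0 := by
            intro h0
            rw [h0, mul_zero] at hcs
            exact (Real.cosh_pos (x := s)).ne' hcs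
          refine Or.inr (Or.inr (Or.inr ⟨s - t₀, ?_, ?_⟩))
          · intro t ht
            obtain ⟨hpos, -, -⟩ := key i t ht
            have hss : Real.sinh (t + (s - t₀))
                = Real.sinh s * (Real.cosh (t - t₀) - v * Real.sinh (t - t₀)) := by
              rw [show t + (s - t₀) = (t - t₀) + s by ring, Real.sinh_add, hcs]
              ring
            intro h0
            have : Real.sinh (t + (s - t₀)) = 0 := by rw [h0, Real.sinh_zero]
            rw [hss] at this
            exact (mul_ne_zero hsinhne hpos.ne') this
          · intro t ht
            obtain ⟨hpos, he, hl⟩ := key i t ht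
            have hss : Real.sinh (t + (s - t₀))
                = Real.sinh s * (Real.cosh (t - t₀) - v * Real.sinh (t - t₀)) := by
              rw [show t + (s - t₀) = (t - t₀) + s by ring, Real.sinh_add, hcs]
              ring
            have hcc : Real.cosh (t + (s - t₀))
                = Real.sinh s * (Real.sinh (t - t₀) - v * Real.cosh (t - t₀)) := by
              rw [show t + (s - t₀) = (t - t₀) + s by ring, Real.cosh_add, hcs]
              ring
            have hstne : Real.sinh (t + (s - t₀)) ≠ 0 := by
              rw [hss]
              exact mul_ne_zero hsinhne hpos.ne'
            constructor
            · rw [hcc, hss, mul_div_mul_left _ _ hsinhne, ← neg_div,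
                eq_div_iff hpos.ne']
              exact he
            · have hgv : g (mu i t₀) = Real.sinh s := by
                rw [hg]
                simp only [← hvdef, if_neg hv1, if_neg hv2, if_neg hv3]
                rfl
              show lam i t = g (mu i t₀) * lam i t₀ / Real.sinh (t + (s - t₀))
              rw [hgv, eq_div_iff hstne, hss]
              linear_combination Real.sinh s * hl
  · intro k
    have hfilter : Finset.univ.filter (fun i => Set.EqOn (mu i) (mu k) I)
        = Finset.univ.filter (fun i => mu i t₀ = mu k t₀) := by
      apply Finset.filter_congr
      intro i _
      exact ⟨fun h => h ht₀, fun h => hVeq i k h⟩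
    rw [hfilter]
    calc (∑ i ∈ Finset.univ.filter (fun i => mu i t₀ = mu k t₀), g (mu i t₀) * lam i t₀)
        = ∑ i ∈ Finset.univ.filter (fun i => mu i t₀ = mu k t₀), g (mu k t₀) * lam i t₀ :=
          Finset.sum_congr rfl fun i hi => by rw [(Finset.mem_filter.mp hi).2]
      _ = g (mu k t₀) * ∑ i ∈ Finset.univ.filter (fun i => mu i t₀ = mu k t₀), lam i t₀ :=
          (Finset.mul_sum _ _ _).symm
      _ = 0 := by rw [hclass k, mul_zero]
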